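/- The kernel of the ring homomorphism φ_3 : C[q_{g1 g2 g3} : g_i ∈ Z2] → C[a_g^{(i)} : g∈Z2, 1≤i≤4] sending q_{g1 g2 g3} ↦ a_{g1}^{(1)} a_{g2}^{(2)} a_{g3}^{(3)} a_{g1+g2+g3}^{(4)} is the ideal generated by the three binomials q_{000}q_{111} − q_{100}q_{011}, q_{001}q_{110} − q_{100}q_{011}, and q_{010}q_{101} − q_{100}q_{011}. -/

import Mathlib

open MvPolynomial

/-- The Fourier parametrization map `φ_n` for the claw tree with `n` leaves and the group `ℤ/2`:
`q_{g_1 … g_n} ↦ a_{g_1}^{(1)} ⋯ a_{g_n}^{(n)} a_{g_1+⋯+g_n}^{(n+1)}`, where the variable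
`a_g^{(i)}` is indexed by the pair `(g, i)`. -/
noncomputable def phi (n : ℕ) :
    MvPolynomial (Fin n → ZMod 2) ℂ →ₐ[ℂ] MvPolynomial (ZMod 2 × Fin (n + 1)) ℂ :=
  aeval fun σ => (∏ i : Fin n, X (σ i, Fin.castSucc i)) * X (∑ i, σ i, Fin.last n)

namespace Stmt8Aux

noncomputable def w (σ : Fin 3 → ZMod 2) : (ZMod 2 × Fin 4) →₀ ℕ :=
  (∑ i : Fin 3, Finsupp.single (σ i, Fin.castSucc i) 1) + Finsupp.single (∑ i, σ i, Fin.last 3) 1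

noncomputable def A (u : (Fin 3 → ZMod 2) →₀ ℕ) : (ZMod 2 × Fin 4) →₀ ℕ :=
  u.sum fun σ k => k • w σ

lemma A_add (u v : (Fin 3 → ZMod 2) →₀ ℕ) : A (u + v) = A u + A v := by
  classical
  exact Finsupp.sum_add_index (by simp) (by intros; rw [add_smul])

lemma A_single (σ : Fin 3 → ZMod 2) (n : ℕ) : A (Finsupp.single σ n) = n • w σ := by
  classical
  exact Finsupp.sum_single_index (by simp)

lemma phi_X (σ : Fin 3 → ZMod 2) :
    phi 3 (X σ) = monomial (w σ) 1 := by
  rw [phi, aeval_X, w]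
  rw [Fin.prod_univ_three, Fin.sum_univ_three]
  rw [X, X, X, X, monomial_mul, monomial_mul, monomial_mul]
  simp [Fin.sum_univ_three, add_assoc]

lemma phi_monomial (u : (Fin 3 → ZMod 2) →₀ ℕ) (c : ℂ) :
    phi 3 (monomial u c) = monomial (A u) c := by
  classical
  induction u using Finsupp.induction with
  | zero => simp [A, monomial_zero', ← C_mul_monomial]
  | single_add σ n u hσ hn ih =>
      rw [show monomial (Finsupp.single σ n + u) c
            = monomial (Finsupp.single σ n) 1 * monomial u c by
        rw [monomial_mul, one_mul]]
      rw [map_mul, ih, A_add, A_single]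
      rw [show monomial (Finsupp.single σ n) (1:ℂ) = (X σ)^n by rw [X_pow_eq_monomial]]
      rw [map_pow, phi_X, monomial_pow, one_pow, monomial_mul, one_mul]

lemma w_apply (σ : Fin 3 → ZMod 2) (b : ZMod 2 × Fin 4) :
    w σ b = ((if (σ 0, (0:Fin 4)) = b then 1 else 0) + (if (σ 1, (1:Fin 4)) = b then 1 else 0)
      + (if (σ 2, (2:Fin 4)) = b then 1 else 0))
      + (if (σ 0 + σ 1 + σ 2, (3:Fin 4)) = b then 1 else 0) := by
  rw [w, Fin.sum_univ_three, Fin.sum_univ_three]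
  simp only [Finsupp.add_apply, Finsupp.single_apply]
  norm_num [Fin.castSucc, Fin.last]
  rfl

lemma sum_univ_pi3 {M : Type*} [AddCommMonoid M] (f : (Fin 3 → ZMod 2) → M) :
    ∑ σ : Fin 3 → ZMod 2, f σ =
      f ![0,0,0] + f ![0,0,1] + f ![0,1,0] + f ![0,1,1] +
      f ![1,0,0] + f ![1,0,1] + f ![1,1,0] + f ![1,1,1] := by
  have h : (Finset.univ : Finset (Fin 3 → ZMod 2)) =
      {![0,0,0], ![0,0,1], ![0,1,0], ![0,1,1], ![1,0,0], ![1,0,1], ![1,1,0], ![1,1,1]} := by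
    decide
  rw [h]
  rw [show ({![0,0,0], ![0,0,1], ![0,1,0], ![0,1,1], ![1,0,0], ![1,0,1], ![1,1,0], ![1,1,1]} :
    Finset (Fin 3 → ZMod 2)) = ([![0,0,0], ![0,0,1], ![0,1,0], ![0,1,1], ![1,0,0], ![1,0,1],
      ![1,1,0], ![1,1,1]] : List (Fin 3 → ZMod 2)).toFinset from rfl]
  rw [List.sum_toFinset _ (by decide)]
  simp [add_assoc]

lemma A_coord (u : (Fin 3 → ZMod 2) →₀ ℕ) (b : ZMod 2 × Fin 4) :
    A u b = ∑ σ : Fin 3 → ZMod 2, u σ * w σ b := by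
  classical
  have h1 : A u b = ∑ σ ∈ u.support, u σ * w σ b := by
    rw [A, Finsupp.sum, Finset.sum_apply']
    simp
  rw [h1]
  exact Finset.sum_subset (Finset.subset_univ _)
    (fun σ _ hσ => by simp [Finsupp.notMem_support_iff.mp hσ])

lemma system {u v : (Fin 3 → ZMod 2) →₀ ℕ} (h : A u = A v) :
    (u ![0,0,0] + u ![0,0,1] + u ![0,1,0] + u ![0,1,1]
      = v ![0,0,0] + v ![0,0,1] + v ![0,1,0] + v ![0,1,1]) ∧
    (u ![1,0,0] + u ![1,0,1] + u ![1,1,0] + u ![1,1,1]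
      = v ![1,0,0] + v ![1,0,1] + v ![1,1,0] + v ![1,1,1]) ∧
    (u ![0,1,0] + u ![0,1,1] + u ![1,1,0] + u ![1,1,1]
      = v ![0,1,0] + v ![0,1,1] + v ![1,1,0] + v ![1,1,1]) ∧
    (u ![0,0,1] + u ![0,1,1] + u ![1,0,1] + u ![1,1,1]
      = v ![0,0,1] + v ![0,1,1] + v ![1,0,1] + v ![1,1,1]) ∧
    (u ![0,0,1] + u ![0,1,0] + u ![1,0,0] + u ![1,1,1]
      = v ![0,0,1] + v ![0,1,0] + v ![1,0,0] + v ![1,1,1]) := by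
  have H : ∀ b, A u b = A v b := fun b => by rw [h]
  have e1 := H (0,0); have e2 := H (1,0); have e3 := H (1,1); have e4 := H (1,2)
  have e5 := H (1,3)
  rw [A_coord, A_coord, sum_univ_pi3, sum_univ_pi3] at e1 e2 e3 e4 e5
  simp (config := { decide := true }) only [w_apply, Matrix.cons_val_zero, Matrix.cons_val_one,
    Matrix.head_cons, Matrix.cons_val_two, Matrix.tail_cons, show ((0:ZMod 2)+0+0 = 0) from rfl,
    show ((0:ZMod 2)+0+1 = 1) from by decide, show ((0:ZMod 2)+1+0 = 1) from by decide,
    show ((0:ZMod 2)+1+1 = 0) from by decide, show ((1:ZMod 2)+0+0 = 1) from by decide,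
    show ((1:ZMod 2)+0+1 = 0) from by decide, show ((1:ZMod 2)+1+0 = 0) from by decide,
    show ((1:ZMod 2)+1+1 = 1) from by decide] at e1 e2 e3 e4 e5
  norm_num at e1 e2 e3 e4 e5
  refine ⟨?_, ?_, ?_, ?_, ?_⟩ <;> omega

noncomputable def Igen : Ideal (MvPolynomial (Fin 3 → ZMod 2) ℂ) :=
  Ideal.span
    {X (![0,0,0] : Fin 3 → ZMod 2) * X ![1,1,1] - X ![1,0,0] * X ![0,1,1],
     X (![0,0,1] : Fin 3 → ZMod 2) * X ![1,1,0] - X ![1,0,0] * X ![0,1,1],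
     X (![0,1,0] : Fin 3 → ZMod 2) * X ![1,0,1] - X ![1,0,0] * X ![0,1,1]}

lemma wid1 : w ![0,0,0] + w ![1,1,1] = w ![1,0,0] + w ![0,1,1] := by
  ext b
  simp (config := { decide := true }) only [Finsupp.add_apply, w_apply, Matrix.cons_val_zero,
    Matrix.cons_val_one, Matrix.head_cons, Matrix.cons_val_two, Matrix.tail_cons,
    show ((0:ZMod 2)+0+0 = 0) from rfl, show ((0:ZMod 2)+1+1 = 0) from by decide,
    show ((1:ZMod 2)+1+1 = 1) from by decide, show ((1:ZMod 2)+0+0 = 1) from by decide]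
  revert b; decide

lemma wid2 : w ![0,0,1] + w ![1,1,0] = w ![1,0,0] + w ![0,1,1] := by
  ext b
  simp (config := { decide := true }) only [Finsupp.add_apply, w_apply, Matrix.cons_val_zero,
    Matrix.cons_val_one, Matrix.head_cons, Matrix.cons_val_two, Matrix.tail_cons,
    show ((0:ZMod 2)+0+1 = 1) from by decide, show ((0:ZMod 2)+1+1 = 0) from by decide,
    show ((1:ZMod 2)+1+0 = 0) from by decide, show ((1:ZMod 2)+0+0 = 1) from by decide]
  revert b; decide

lemma wid3 : w ![0,1,0] + w ![1,0,1] = w ![1,0,0] + w ![0,1,1] := by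
  ext b
  simp (config := { decide := true }) only [Finsupp.add_apply, w_apply, Matrix.cons_val_zero,
    Matrix.cons_val_one, Matrix.head_cons, Matrix.cons_val_two, Matrix.tail_cons,
    show ((0:ZMod 2)+1+0 = 1) from by decide, show ((0:ZMod 2)+1+1 = 0) from by decide,
    show ((1:ZMod 2)+0+1 = 0) from by decide, show ((1:ZMod 2)+0+0 = 1) from by decide]
  revert b; decide

lemma X_mul_X (a b : Fin 3 → ZMod 2) :
    (X a * X b : MvPolynomial (Fin 3 → ZMod 2) ℂ)
      = monomial (Finsupp.single a 1 + Finsupp.single b 1) 1 := by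
  rw [X, X, monomial_mul, one_mul]

/-- One descent step along a quadric move. -/
lemma descend (a b c d : Fin 3 → ZMod 2) (hab : a ≠ b) (hac : a ≠ c) (had : a ≠ d)
    (hw : w a + w b = w c + w d)
    (hg : (X a * X b - X c * X d : MvPolynomial (Fin 3 → ZMod 2) ℂ) ∈ Igen)
    (u v : (Fin 3 → ZMod 2) →₀ ℕ) (hA : A u = A v)
    (hua : v a < u a) (hub : 1 ≤ u b) :
    ∃ u', A u' = A v ∧ ((monomial u (1:ℂ)) - monomial u' 1 ∈ Igen) ∧ u' a + 1 = u a ∧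
      (∀ σ, σ ≠ a → σ ≠ b → σ ≠ c → σ ≠ d → u' σ = u σ) := by
  classical
  set m := u - Finsupp.single a 1 - Finsupp.single b 1 with hm
  have hma : 1 ≤ u a := by omega
  have hu : m + Finsupp.single a 1 + Finsupp.single b 1 = u := by
    ext σ
    simp only [hm, Finsupp.add_apply, Finsupp.tsub_apply, Finsupp.single_apply]
    rcases eq_or_ne a σ with h1 | h1
    · rcases eq_or_ne b σ with h2 | h2
      · exact absurd (h1.trans h2.symm) hab
      · subst h1; simp [if_neg h2]; omega
    · rcases eq_or_ne b σ with h2 | h2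
      · subst h2; simp [if_neg h1]; omega
      · simp [if_neg h1, if_neg h2]
  refine ⟨m + Finsupp.single c 1 + Finsupp.single d 1, ?_, ?_, ?_, ?_⟩
  · rw [← hA, ← hu]
    simp only [A_add, A_single, one_smul]
    rw [add_assoc, add_assoc, hw]
  · have heq : (monomial u (1:ℂ)) - monomial (m + Finsupp.single c 1 + Finsupp.single d 1) 1
        = monomial m 1 * (X a * X b - X c * X d) := by
      rw [← hu, mul_sub, X_mul_X, X_mul_X, monomial_mul, monomial_mul, one_mul,
        add_assoc, add_assoc]
    rw [heq]
    exact Ideal.mul_mem_left _ _ hg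
  · have hma' : m a = u a - 1 := by
      simp only [hm, Finsupp.tsub_apply, Finsupp.single_apply, if_pos rfl,
        if_neg (Ne.symm hab)]
      simp
    simp only [Finsupp.add_apply, Finsupp.single_apply, if_neg (Ne.symm hac),
      if_neg (Ne.symm had), hma']
    omega
  · intro σ h1 h2 h3 h4
    simp only [hm, Finsupp.add_apply, Finsupp.tsub_apply, Finsupp.single_apply,
      if_neg (Ne.symm h1), if_neg (Ne.symm h2), if_neg (Ne.symm h3), if_neg (Ne.symm h4)]
    simp

lemma eq_of_A_eq {u v : (Fin 3 → ZMod 2) →₀ ℕ} (hA : A u = A v)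
    (h1 : u ![0,0,0] = v ![0,0,0]) (h2 : u ![0,0,1] = v ![0,0,1])
    (h3 : u ![0,1,0] = v ![0,1,0]) : u = v := by
  obtain ⟨E1, E2, E3, E4, E5⟩ := system hA
  ext σ
  have hσ : σ = ![σ 0, σ 1, σ 2] := by
    funext i; fin_cases i <;> rfl
  have h2' : ∀ g : ZMod 2, g = 0 ∨ g = 1 := by decide
  rw [hσ]
  rcases h2' (σ 0) with h | h <;> rcases h2' (σ 1) with h' | h' <;>
    rcases h2' (σ 2) with h'' | h'' <;> rw [h, h', h''] <;> omega

lemma gen1_mem : (X (![0,0,0] : Fin 3 → ZMod 2) * X ![1,1,1] - X ![1,0,0] * X ![0,1,1] :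
    MvPolynomial (Fin 3 → ZMod 2) ℂ) ∈ Igen :=
  Ideal.subset_span (by simp)

lemma gen2_mem : (X (![0,0,1] : Fin 3 → ZMod 2) * X ![1,1,0] - X ![1,0,0] * X ![0,1,1] :
    MvPolynomial (Fin 3 → ZMod 2) ℂ) ∈ Igen :=
  Ideal.subset_span (by simp)

lemma gen3_mem : (X (![0,1,0] : Fin 3 → ZMod 2) * X ![1,0,1] - X ![1,0,0] * X ![0,1,1] :
    MvPolynomial (Fin 3 → ZMod 2) ℂ) ∈ Igen :=
  Ideal.subset_span (by simp)

lemma key : ∀ (n : ℕ) (u v : (Fin 3 → ZMod 2) →₀ ℕ), A u = A v →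
    ((u ![0,0,0] : ℤ) - v ![0,0,0]).natAbs + ((u ![0,0,1] : ℤ) - v ![0,0,1]).natAbs
      + ((u ![0,1,0] : ℤ) - v ![0,1,0]).natAbs ≤ n →
    (monomial u (1:ℂ)) - monomial v 1 ∈ Igen := by
  intro n
  induction n with
  | zero =>
      intro u v hA hm
      have h1 : u ![0,0,0] = v ![0,0,0] := by omega
      have h2 : u ![0,0,1] = v ![0,0,1] := by omega
      have h3 : u ![0,1,0] = v ![0,1,0] := by omega
      rw [eq_of_A_eq hA h1 h2 h3, sub_self]
      exact zero_mem _
  | succ n ih =>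
      intro u v hA hm
      obtain ⟨E1, E2, E3, E4, E5⟩ := system hA
      rcases Nat.lt_trichotomy (u ![0,0,0]) (v ![0,0,0]) with hx | hx | hx
      · -- descend on v with move 1
        obtain ⟨v', hA', hmem, hval, hoth⟩ := descend ![0,0,0] ![1,1,1] ![1,0,0] ![0,1,1]
          (by decide) (by decide) (by decide) wid1 gen1_mem v u hA.symm hx (by omega)
        have hv1 : v' ![0,0,1] = v ![0,0,1] := hoth _ (by decide) (by decide) (by decide) (by decide)
        have hv2 : v' ![0,1,0] = v ![0,1,0] := hoth _ (by decide) (by decide) (by decide) (by decide)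
        have h2 : (monomial u (1:ℂ)) - monomial v' 1 ∈ Igen :=
          ih u v' hA'.symm (by omega)
        have : (monomial u (1:ℂ)) - monomial v 1
            = ((monomial u (1:ℂ)) - monomial v' 1) - ((monomial v (1:ℂ)) - monomial v' 1) := by
          ring
        rw [this]; exact sub_mem h2 hmem
      · rcases Nat.lt_trichotomy (u ![0,0,1]) (v ![0,0,1]) with hy | hy | hy
        · obtain ⟨v', hA', hmem, hval, hoth⟩ := descend ![0,0,1] ![1,1,0] ![1,0,0] ![0,1,1]
            (by decide) (by decide) (by decide) wid2 gen2_mem v u hA.symm hy (by omega)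
          have hv1 : v' ![0,0,0] = v ![0,0,0] := hoth _ (by decide) (by decide) (by decide) (by decide)
          have hv2 : v' ![0,1,0] = v ![0,1,0] := hoth _ (by decide) (by decide) (by decide) (by decide)
          have h2 : (monomial u (1:ℂ)) - monomial v' 1 ∈ Igen :=
            ih u v' hA'.symm (by omega)
          have : (monomial u (1:ℂ)) - monomial v 1
              = ((monomial u (1:ℂ)) - monomial v' 1) - ((monomial v (1:ℂ)) - monomial v' 1) := by
            ring
          rw [this]; exact sub_mem h2 hmem
        · rcases Nat.lt_trichotomy (u ![0,1,0]) (v ![0,1,0]) with hz | hz | hz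
          · obtain ⟨v', hA', hmem, hval, hoth⟩ := descend ![0,1,0] ![1,0,1] ![1,0,0] ![0,1,1]
              (by decide) (by decide) (by decide) wid3 gen3_mem v u hA.symm hz (by omega)
            have hv1 : v' ![0,0,0] = v ![0,0,0] := hoth _ (by decide) (by decide) (by decide) (by decide)
            have hv2 : v' ![0,0,1] = v ![0,0,1] := hoth _ (by decide) (by decide) (by decide) (by decide)
            have h2 : (monomial u (1:ℂ)) - monomial v' 1 ∈ Igen :=
              ih u v' hA'.symm (by omega)
            have : (monomial u (1:ℂ)) - monomial v 1
                = ((monomial u (1:ℂ)) - monomial v' 1) - ((monomial v (1:ℂ)) - monomial v' 1) := by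
              ring
            rw [this]; exact sub_mem h2 hmem
          · rw [eq_of_A_eq hA hx hy hz, sub_self]; exact zero_mem _
          · obtain ⟨u', hA', hmem, hval, hoth⟩ := descend ![0,1,0] ![1,0,1] ![1,0,0] ![0,1,1]
              (by decide) (by decide) (by decide) wid3 gen3_mem u v hA hz (by omega)
            have hv1 : u' ![0,0,0] = u ![0,0,0] := hoth _ (by decide) (by decide) (by decide) (by decide)
            have hv2 : u' ![0,0,1] = u ![0,0,1] := hoth _ (by decide) (by decide) (by decide) (by decide)
            have h2 : (monomial u' (1:ℂ)) - monomial v 1 ∈ Igen :=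
              ih u' v hA' (by omega)
            have : (monomial u (1:ℂ)) - monomial v 1
                = ((monomial u (1:ℂ)) - monomial u' 1) + ((monomial u' (1:ℂ)) - monomial v 1) := by
              ring
            rw [this]; exact add_mem hmem h2
        · obtain ⟨u', hA', hmem, hval, hoth⟩ := descend ![0,0,1] ![1,1,0] ![1,0,0] ![0,1,1]
            (by decide) (by decide) (by decide) wid2 gen2_mem u v hA hy (by omega)
          have hv1 : u' ![0,0,0] = u ![0,0,0] := hoth _ (by decide) (by decide) (by decide) (by decide)
          have hv2 : u' ![0,1,0] = u ![0,1,0] := hoth _ (by decide) (by decide) (by decide) (by decide)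
          have h2 : (monomial u' (1:ℂ)) - monomial v 1 ∈ Igen :=
            ih u' v hA' (by omega)
          have : (monomial u (1:ℂ)) - monomial v 1
              = ((monomial u (1:ℂ)) - monomial u' 1) + ((monomial u' (1:ℂ)) - monomial v 1) := by
            ring
          rw [this]; exact add_mem hmem h2
      · obtain ⟨u', hA', hmem, hval, hoth⟩ := descend ![0,0,0] ![1,1,1] ![1,0,0] ![0,1,1]
          (by decide) (by decide) (by decide) wid1 gen1_mem u v hA hx (by omega)
        have hv1 : u' ![0,0,1] = u ![0,0,1] := hoth _ (by decide) (by decide) (by decide) (by decide)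
        have hv2 : u' ![0,1,0] = u ![0,1,0] := hoth _ (by decide) (by decide) (by decide) (by decide)
        have h2 : (monomial u' (1:ℂ)) - monomial v 1 ∈ Igen :=
          ih u' v hA' (by omega)
        have : (monomial u (1:ℂ)) - monomial v 1
            = ((monomial u (1:ℂ)) - monomial u' 1) + ((monomial u' (1:ℂ)) - monomial v 1) := by
          ring
        rw [this]; exact add_mem hmem h2

lemma binomial_mem {u v : (Fin 3 → ZMod 2) →₀ ℕ} (h : A u = A v) :
    (monomial u (1:ℂ)) - monomial v 1 ∈ Igen :=
  key _ u v h le_rfl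

lemma ker_le : ∀ (n : ℕ) (p : MvPolynomial (Fin 3 → ZMod 2) ℂ), p.support.card ≤ n →
    phi 3 p = 0 → p ∈ Igen := by
  intro n
  induction n with
  | zero =>
      intro p hp _
      have h0 : p.support = ∅ := Finset.card_eq_zero.mp (Nat.le_zero.mp hp)
      rw [MvPolynomial.support_eq_empty.mp h0]
      exact zero_mem _
  | succ n ih =>
      intro p hp hphi
      by_cases h0 : p = 0
      · rw [h0]; exact zero_mem _
      obtain ⟨u, hu⟩ := MvPolynomial.support_nonempty.mpr h0
      have hrep : phi 3 p = ∑ v ∈ p.support, monomial (A v) (coeff v p) := by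
        conv_lhs => rw [p.as_sum]
        rw [map_sum]
        exact Finset.sum_congr rfl fun v _ => phi_monomial v _
      have hc0 : (∑ v ∈ p.support, if A v = A u then coeff v p else 0) = 0 := by
        have h := congrArg (coeff (A u)) hphi
        rw [hrep] at h
        rw [MvPolynomial.coeff_sum] at h
        simpa [coeff_monomial] using h
      obtain ⟨v, hv, hvu, hAv⟩ : ∃ v ∈ p.support, v ≠ u ∧ A v = A u := by
        by_contra hno
        push_neg at hno
        rw [Finset.sum_eq_single_of_mem u hu
          (fun b hb hbu => if_neg (hno b hb hbu)), if_pos rfl] at hc0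
        exact (MvPolynomial.mem_support_iff.mp hu) hc0
      set c := coeff u p with hc
      set q := p - (monomial u c - monomial v c) with hq
      have hAq : phi 3 q = 0 := by
        rw [hq, map_sub, map_sub, phi_monomial, phi_monomial, hAv, hphi]
        ring
      have hsub : q.support ⊆ p.support.erase u := by
        intro t ht
        have htc := MvPolynomial.mem_support_iff.mp ht
        rw [Finset.mem_erase]
        have htu : t ≠ u := by
          rintro rfl
          apply htc
          simp [hq, coeff_sub, coeff_monomial, if_pos rfl, if_neg hvu, hc]
        refine ⟨htu, ?_⟩
        by_contra htp
        have h1 : coeff t p = 0 := MvPolynomial.notMem_support_iff.mp htp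
        have htv : t ≠ v := by rintro rfl; exact htp hv
        apply htc
        simp [hq, coeff_sub, coeff_monomial, if_neg (Ne.symm htu), if_neg (Ne.symm htv), h1]
      have hcard : q.support.card ≤ n := by
        have := Finset.card_le_card hsub
        rw [Finset.card_erase_of_mem hu] at this
        omega
      have hqI : q ∈ Igen := ih q hcard hAq
      have hbin : monomial u c - monomial v c ∈ Igen := by
        have heq : monomial u c - monomial v c = C c * ((monomial u (1:ℂ)) - monomial v 1) := by
          rw [mul_sub, C_mul_monomial, C_mul_monomial]; simp
        rw [heq]
        exact Ideal.mul_mem_left _ _ (binomial_mem hAv.symm)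
      have hpq : p = q + (monomial u c - monomial v c) := by rw [hq]; ring
      rw [hpq]
      exact add_mem hqI hbin

lemma gen_ker (a b c d : Fin 3 → ZMod 2) (hw : w a + w b = w c + w d) :
    (X a * X b - X c * X d : MvPolynomial (Fin 3 → ZMod 2) ℂ)
      ∈ RingHom.ker (phi 3).toRingHom := by
  rw [RingHom.mem_ker]
  show phi 3 (X a * X b - X c * X d) = 0
  rw [map_sub, map_mul, map_mul, phi_X, phi_X, phi_X, phi_X, monomial_mul, monomial_mul,
    one_mul, hw, sub_self]

end Stmt8Aux

open Stmt8Aux in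
/-- The kernel of `φ₃` is generated by the three binomials
`q₀₀₀q₁₁₁ − q₁₀₀q₀₁₁`, `q₀₀₁q₁₁₀ − q₁₀₀q₀₁₁`, `q₀₁₀q₁₀₁ − q₁₀₀q₀₁₁`. -/
theorem stmt_8 :
    RingHom.ker (phi 3).toRingHom =
      Ideal.span
        {X (![0,0,0] : Fin 3 → ZMod 2) * X ![1,1,1] - X ![1,0,0] * X ![0,1,1],
         X (![0,0,1] : Fin 3 → ZMod 2) * X ![1,1,0] - X ![1,0,0] * X ![0,1,1],
         X (![0,1,0] : Fin 3 → ZMod 2) * X ![1,0,1] - X ![1,0,0] * X ![0,1,1]} := by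
  apply le_antisymm
  · intro p hp
    exact ker_le p.support.card p le_rfl (RingHom.mem_ker.mp hp)
  · rw [Ideal.span_le]
    rintro g hg
    simp only [Set.mem_insert_iff, Set.mem_singleton_iff] at hg
    rcases hg with rfl | rfl | rfl
    · exact gen_ker _ _ _ _ wid1
    · exact gen_ker _ _ _ _ wid2
    · exact gen_ker _ _ _ _ wid3
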